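/- Let α, β, μ be positive reals. Then Σ_{n=0}^{∞} (μ^n/n!) · (α)_n/(α + β)_n · ₁F₁(α + n, α + β + n; −μ) = 1; that is, the stationary protein distribution P(n) = (μ^n/n!)·(α)_n/(α + β)_n·₁F₁(α + n, α + β + n; −μ) of the common ON-OFF model with constant normalized rates α, β, μ is correctly normalized. -/

import Mathlib

open Finset

/-- The ascending Pochhammer symbol `(x)_n = x(x+1)⋯(x+n−1)`. -/
noncomputable def poch (x : ℝ) (n : ℕ) : ℝ := ∏ i ∈ Finset.range n, (x + (i : ℝ))

/-- The confluent hypergeometric series `₁F₁(a, b; z) = Σ_{n=0}^∞ (a)_n/(b)_n · zⁿ/n!`. -/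
noncomputable def F11 (a b z : ℝ) : ℝ := ∑' n : ℕ, poch a n / poch b n * z ^ n / (n.factorial : ℝ)

lemma poch_pos {x : ℝ} (hx : 0 < x) (n : ℕ) : 0 < poch x n :=
  Finset.prod_pos fun i _ => by positivity

lemma poch_le {x y : ℝ} (hx : 0 < x) (hxy : x ≤ y) (n : ℕ) : poch x n ≤ poch y n :=
  Finset.prod_le_prod (fun i _ => by positivity) (fun i _ => by linarith)

lemma poch_add (x : ℝ) (n m : ℕ) : poch x (n + m) = poch x n * poch (x + n) m := by
  unfold poch
  rw [Finset.prod_range_add]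
  congr 1
  refine Finset.prod_congr rfl fun i _ => ?_
  push_cast; ring

set_option maxHeartbeats 1000000 in
/-- The stationary protein distribution (20) of the common ON-OFF model with constant
normalized rates `α, β, μ > 0`,
`P(n) = (μⁿ/n!)·(α)_n/(α+β)_n·₁F₁(α+n, α+β+n; −μ)`, is correctly normalized:
`Σ_{n=0}^∞ P(n) = 1`. -/
theorem onoff_distribution_normalized (α β μ : ℝ)
    (hα : 0 < α) (hβ : 0 < β) (hμ : 0 < μ) :
    ∑' n : ℕ, (μ ^ n / (n.factorial : ℝ)) * (poch α n / poch (α + β) n)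
        * F11 (α + n) (α + β + n) (-μ) = 1 := by
  have hαβ : 0 < α + β := by linarith
  set g : ℕ × ℕ → ℝ := fun p =>
    poch α (p.1 + p.2) / poch (α + β) (p.1 + p.2)
      * (μ ^ p.1 / (p.1.factorial : ℝ)) * ((-μ) ^ p.2 / (p.2.factorial : ℝ)) with hg_def
  -- summability of the double series
  have hbound : Summable fun p : ℕ × ℕ => (μ ^ p.1 / (p.1.factorial : ℝ)) *
      (μ ^ p.2 / (p.2.factorial : ℝ)) :=
    (Real.summable_pow_div_factorial μ).mul_of_nonneg (Real.summable_pow_div_factorial μ)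
      (fun n => by positivity) (fun n => by positivity)
  have hratio : ∀ k : ℕ, 0 < poch α k / poch (α + β) k ∧ poch α k / poch (α + β) k ≤ 1 := by
    intro k
    have h1 := poch_pos hα k
    have h2 := poch_pos hαβ k
    constructor
    · positivity
    · rw [div_le_one h2]; exact poch_le hα (by linarith) k
  have hgsum : Summable g := by
    refine hbound.of_norm_bounded fun p => ?_
    rw [hg_def]
    have h1 := (hratio (p.1 + p.2)).1
    have h2 := (hratio (p.1 + p.2)).2
    rw [Real.norm_eq_abs, abs_mul, abs_mul, abs_of_pos h1]
    have e1 : |μ ^ p.1 / (p.1.factorial : ℝ)| = μ ^ p.1 / (p.1.factorial : ℝ) := by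
      rw [abs_of_pos]; positivity
    have e2 : |(-μ) ^ p.2 / (p.2.factorial : ℝ)| = μ ^ p.2 / (p.2.factorial : ℝ) := by
      rw [abs_div, abs_pow, abs_neg, abs_of_pos hμ, abs_of_pos]; positivity
    rw [e1, e2]
    have hpos : 0 < (μ ^ p.1 / (p.1.factorial : ℝ)) * (μ ^ p.2 / (p.2.factorial : ℝ)) := by
      positivity
    nlinarith
  -- step 1: each term equals the inner tsum
  have hstep1 : ∀ n : ℕ, (μ ^ n / (n.factorial : ℝ)) * (poch α n / poch (α + β) n)
      * F11 (α + n) (α + β + n) (-μ) = ∑' m : ℕ, g (n, m) := by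
    intro n
    rw [F11, ← tsum_mul_left]
    refine tsum_congr fun m => ?_
    rw [hg_def]
    simp only
    have h1 : poch α (n + m) = poch α n * poch (α + n) m := poch_add α n m
    have h2 : poch (α + β) (n + m) = poch (α + β) n * poch (α + β + n) m := poch_add (α + β) n m
    have hn1 := (poch_pos hα n).ne'
    have hn2 := (poch_pos hαβ n).ne'
    have hn3 := (poch_pos (by linarith : (0:ℝ) < α + n) m).ne'
    have hn4 := (poch_pos (by linarith : (0:ℝ) < α + β + n) m).ne'
    have hf1 : (n.factorial : ℝ) ≠ 0 := Nat.cast_ne_zero.mpr n.factorial_ne_zero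
    have hf2 : (m.factorial : ℝ) ≠ 0 := Nat.cast_ne_zero.mpr m.factorial_ne_zero
    rw [h1, h2]
    field_simp
  rw [tsum_congr hstep1]
  -- step 2: iterated tsum to product tsum
  rw [← Summable.tsum_prod' hgsum fun b => hgsum.prod_factor b]
  -- step 3: product tsum to antidiagonal sums
  have hstep3 : ∑' p : ℕ × ℕ, g p = ∑' k : ℕ, ∑ kl ∈ Finset.HasAntidiagonal.antidiagonal k, g kl := by
    set h : (Σ n : ℕ, (Finset.HasAntidiagonal.antidiagonal n : Finset (ℕ × ℕ))) → ℝ :=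
      fun x => g (Finset.HasAntidiagonal.sigmaAntidiagonalEquivProd x) with hh_def
    have hterm : ∀ k : ℕ, ∑ kl ∈ Finset.HasAntidiagonal.antidiagonal k, g kl
        = ∑' c : (Finset.HasAntidiagonal.antidiagonal k : Finset (ℕ × ℕ)), h ⟨k, c⟩ := fun k => by
      rw [tsum_fintype]
      exact (Finset.sum_coe_sort _ g).symm
    rw [tsum_congr hterm, ← Finset.HasAntidiagonal.sigmaAntidiagonalEquivProd.tsum_eq g]
    exact (Summable.tsum_sigma' (f := h) (fun n => (hasSum_fintype _).summable)
      (Finset.HasAntidiagonal.sigmaAntidiagonalEquivProd.summable_iff.mpr hgsum))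
  rw [hstep3]
  -- step 4: each antidiagonal sum
  have hstep4 : ∀ k : ℕ, ∑ kl ∈ Finset.HasAntidiagonal.antidiagonal k, g kl =
      poch α k / poch (α + β) k * (0 : ℝ) ^ k / (k.factorial : ℝ) := by
    intro k
    rw [Finset.Nat.sum_antidiagonal_eq_sum_range_succ_mk]
    have hzero : ((0 : ℝ)) ^ k = ∑ i ∈ Finset.range (k + 1),
        μ ^ i * (-μ) ^ (k - i) * (k.choose i : ℝ) := by
      rw [← add_pow]
      norm_num
    rw [hzero, Finset.mul_sum, Finset.sum_div]
    refine Finset.sum_congr rfl fun i hi => ?_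
    have hik : i ≤ k := Nat.lt_succ_iff.mp (Finset.mem_range.mp hi)
    have hadd : i + (k - i) = k := Nat.add_sub_cancel' hik
    have hchoose : ((k.choose i : ℝ)) * (i.factorial : ℝ) * ((k - i).factorial : ℝ)
        = (k.factorial : ℝ) := by
      exact_mod_cast congrArg (Nat.cast (R := ℝ)) (Nat.choose_mul_factorial_mul_factorial hik)
    rw [hg_def]
    simp only [hadd]
    have hf1 : (i.factorial : ℝ) ≠ 0 := Nat.cast_ne_zero.mpr i.factorial_ne_zero
    have hf2 : ((k - i).factorial : ℝ) ≠ 0 := Nat.cast_ne_zero.mpr (k - i).factorial_ne_zero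
    have hf3 : (k.factorial : ℝ) ≠ 0 := Nat.cast_ne_zero.mpr k.factorial_ne_zero
    rw [show poch α k / poch (α + β) k * (μ ^ i / (i.factorial : ℝ))
          * ((-μ) ^ (k - i) / ((k - i).factorial : ℝ))
        = (poch α k / poch (α + β) k * μ ^ i * (-μ) ^ (k - i))
          / ((i.factorial : ℝ) * ((k - i).factorial : ℝ)) by ring]
    rw [div_eq_div_iff (mul_ne_zero hf1 hf2) hf3]
    linear_combination (-(poch α k / poch (α + β) k * μ ^ i * (-μ) ^ (k - i))) * hchoose
  rw [tsum_congr hstep4]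
  rw [tsum_eq_single 0 (fun k hk => by rw [zero_pow hk]; simp)]
  simp [poch]
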